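/- Let N ≥ 1, let f₁,…,f_N and ψ₁,…,ψ_N : ℝ → ℝ be smooth with each f_m nowhere zero, fix base points r*₁,…,r*_N ∈ ℝ, and for each k ∈ ℤ define c_k : ℝ^N → ℝ by c_k(r) = Σ_{m=1}^N ∫_{r*_m}^{r_m} f_m(s)^k ψ'_m(s) ds. Suppose r : ℝ² → ℝ^N is smooth and solves the diagonal system ∂_t r_i = [c₁(r) − c₀(r) f_i(r_i)] ∂_x r_i for every i. Then C_k(x,t) := c_k(r(x,t)) satisfies the hydrodynamic chain ∂_t C_k = C₁ ∂_x C_k − C₀ ∂_x C_{k+1} for every k ∈ ℤ. -/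

import Mathlib

open Real Set

/-- Partial derivative in the first variable. -/
noncomputable def pdx (f : ℝ → ℝ → ℝ) (x t : ℝ) : ℝ := deriv (fun x' => f x' t) x

/-- Partial derivative in the second variable. -/
noncomputable def pdt (f : ℝ → ℝ → ℝ) (x t : ℝ) : ℝ := deriv (fun t' => f x t') t

/-- If `r` solves the diagonal system `∂ₜ rᵢ = [c₁(r) − c₀(r) fᵢ(rᵢ)] ∂ₓ rᵢ` with
moments `c_k(r) = Σ_m ∫_{r*_m}^{r_m} f_m(s)^k ψ'_m(s) ds`, then `C_k = c_k ∘ r`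
satisfies the hydrodynamic chain `∂ₜ C_k = C₁ ∂ₓ C_k − C₀ ∂ₓ C_{k+1}`. -/
theorem reductions_of_second_chain
    (N : ℕ) (hN : 1 ≤ N) (f ψ : Fin N → ℝ → ℝ)
    (hf : ∀ m, ContDiff ℝ (⊤ : ℕ∞) (f m)) (hψ : ∀ m, ContDiff ℝ (⊤ : ℕ∞) (ψ m))
    (hf0 : ∀ m s, f m s ≠ 0) (r₀ : Fin N → ℝ)
    (c : ℤ → (Fin N → ℝ) → ℝ)
    (hc : ∀ (k : ℤ) (rr : Fin N → ℝ),
      c k rr = ∑ m, ∫ s in (r₀ m)..(rr m), (f m s) ^ k * deriv (ψ m) s)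
    (r : ℝ → ℝ → Fin N → ℝ)
    (hr : ContDiff ℝ (⊤ : ℕ∞) (fun p : ℝ × ℝ => r p.1 p.2))
    (hsys : ∀ (x t : ℝ) (i : Fin N),
      pdt (fun x' t' => r x' t' i) x t
        = (c 1 (r x t) - c 0 (r x t) * f i (r x t i)) * pdx (fun x' t' => r x' t' i) x t)
    (C : ℤ → ℝ → ℝ → ℝ) (hC : ∀ k x t, C k x t = c k (r x t)) :
    ∀ (k : ℤ) (x t : ℝ),
      pdt (C k) x t = C 1 x t * pdx (C k) x t - C 0 x t * pdx (C (k + 1)) x t := by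
  intro k x t
  -- continuity of the integrand
  have hcont : ∀ (k : ℤ) (m : Fin N), Continuous (fun s => f m s ^ k * deriv (ψ m) s) := by
    intro k m
    exact ((hf m).continuous.zpow₀ k fun s => Or.inl (hf0 m s)).mul
      ((hψ m).continuous_deriv (mod_cast le_top))
  -- FTC
  have hG : ∀ (k : ℤ) (m : Fin N) (y : ℝ),
      HasDerivAt (fun y' => ∫ s in (r₀ m)..y', f m s ^ k * deriv (ψ m) s)
        (f m y ^ k * deriv (ψ m) y) y := fun k m y =>
    ((hcont k m).integral_hasStrictDerivAt (r₀ m) y).hasDerivAt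
  -- differentiability of components of r
  have hdiff : Differentiable ℝ (fun p : ℝ × ℝ => r p.1 p.2) := hr.differentiable (by simp)
  have hdi : ∀ i : Fin N, Differentiable ℝ (fun p : ℝ × ℝ => r p.1 p.2 i) :=
    differentiable_pi.mp hdiff
  have hrt : ∀ m : Fin N,
      HasDerivAt (fun t' => r x t' m) (pdt (fun x' t' => r x' t' m) x t) t := by
    intro m
    have : DifferentiableAt ℝ (fun t' => r x t' m) t :=
      ((hdi m).comp ((differentiable_const x).prodMk differentiable_id)).differentiableAt
    exact this.hasDerivAt
  have hrx : ∀ m : Fin N,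
      HasDerivAt (fun x' => r x' t m) (pdx (fun x' t' => r x' t' m) x t) x := by
    intro m
    have : DifferentiableAt ℝ (fun x' => r x' t m) x :=
      ((hdi m).comp (differentiable_id.prodMk (differentiable_const t))).differentiableAt
    exact this.hasDerivAt
  -- derivative of C k in t
  have hCt : ∀ (k : ℤ), pdt (C k) x t
      = ∑ m, (f m (r x t m) ^ k * deriv (ψ m) (r x t m)) * pdt (fun x' t' => r x' t' m) x t := by
    intro k
    have h1 : HasDerivAt (fun t' => C k x t')
        (∑ m, (f m (r x t m) ^ k * deriv (ψ m) (r x t m)) * pdt (fun x' t' => r x' t' m) x t)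
        t := by
      have h2 : HasDerivAt
          (fun t' => ∑ m, ∫ s in (r₀ m)..(r x t' m), f m s ^ k * deriv (ψ m) s)
          (∑ m, (f m (r x t m) ^ k * deriv (ψ m) (r x t m)) * pdt (fun x' t' => r x' t' m) x t)
          t := by
        apply HasDerivAt.fun_sum
        intro m _
        exact (hG k m (r x t m)).comp t (hrt m)
      have he : (fun t' => C k x t')
          = fun t' => ∑ m, ∫ s in (r₀ m)..(r x t' m), f m s ^ k * deriv (ψ m) s := by
        funext t'; rw [hC, hc]
      rw [he]; exact h2
    exact h1.deriv
  -- derivative of C k in x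
  have hCx : ∀ (k : ℤ), pdx (C k) x t
      = ∑ m, (f m (r x t m) ^ k * deriv (ψ m) (r x t m)) * pdx (fun x' t' => r x' t' m) x t := by
    intro k
    have h1 : HasDerivAt (fun x' => C k x' t)
        (∑ m, (f m (r x t m) ^ k * deriv (ψ m) (r x t m)) * pdx (fun x' t' => r x' t' m) x t)
        x := by
      have h2 : HasDerivAt
          (fun x' => ∑ m, ∫ s in (r₀ m)..(r x' t m), f m s ^ k * deriv (ψ m) s)
          (∑ m, (f m (r x t m) ^ k * deriv (ψ m) (r x t m)) * pdx (fun x' t' => r x' t' m) x t)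
          x := by
        apply HasDerivAt.fun_sum
        intro m _
        exact (hG k m (r x t m)).comp x (hrx m)
      have he : (fun x' => C k x' t)
          = fun x' => ∑ m, ∫ s in (r₀ m)..(r x' t m), f m s ^ k * deriv (ψ m) s := by
        funext x'; rw [hC, hc]
      rw [he]; exact h2
    exact h1.deriv
  rw [hCt k, hCx k, hCx (k + 1), hC 1 x t, hC 0 x t, Finset.mul_sum, Finset.mul_sum,
    ← Finset.sum_sub_distrib]
  apply Finset.sum_congr rfl
  intro m _
  rw [hsys x t m, zpow_add_one₀ (hf0 m (r x t m))]
  ring
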